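/- Let m, n ≥ 2 and k ≥ 1 be integers. The independence number of the graph Γ^k_{m,n}(k) equals max{k, n}. -/

import Mathlib

/-- A set of vertices is a coclique (independent set) of a graph. -/
def IsCoclique {V : Type*} (G : SimpleGraph V) (s : Set V) : Prop :=
  ∀ ⦃a⦄, a ∈ s → ∀ ⦃b⦄, b ∈ s → ¬ G.Adj a b

/-- The independence number of a graph: the maximum size of a coclique. -/
noncomputable def indepNum {V : Type*} [Fintype V] (G : SimpleGraph V) : ℕ :=
  sSup {n | ∃ s : Finset V, IsCoclique G ↑s ∧ s.card = n}

/-- The graph `Γ^k_{m,n}(k)`: vertices are triples `(a,b,c)` with `a ∈ [k]`,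
`b ∈ [m]`, `c ∈ [n]` (the partition of `[k]` is into singletons), and
`(a,b,c) ~ (a',b',c')` iff (`c = c'` and `b ≠ b'`) or (`c ≠ c'` and `a ≠ a'`). -/
def Gamma (k m n : ℕ) : SimpleGraph (Fin k × Fin m × Fin n) where
  Adj v w := (v.2.2 = w.2.2 ∧ v.2.1 ≠ w.2.1) ∨ (v.2.2 ≠ w.2.2 ∧ v.1 ≠ w.1)
  symm := by
    refine ⟨?_⟩
    intro v w h
    rcases h with ⟨h1, h2⟩ | ⟨h1, h2⟩
    · exact Or.inl ⟨h1.symm, h2.symm⟩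
    · exact Or.inr ⟨fun he => h1 he.symm, fun he => h2 he.symm⟩
  loopless := by
    refine ⟨?_⟩
    intro v h
    rcases h with ⟨_, h2⟩ | ⟨h1, _⟩
    · exact h2 rfl
    · exact h1 rfl

/-- The independence number of `Γ^k_{m,n}(k)` equals `max {k, n}`. -/
theorem indepNum_Gamma (k m n : ℕ) (hk : 1 ≤ k) (hm : 2 ≤ m) (hn : 2 ≤ n) :
    indepNum (Gamma k m n) = max k n := by
  have hbdd : BddAbove {N | ∃ s : Finset (Fin k × Fin m × Fin n),
      IsCoclique (Gamma k m n) ↑s ∧ s.card = N} := by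
    refine ⟨Fintype.card (Fin k × Fin m × Fin n), ?_⟩
    rintro N ⟨s, -, rfl⟩
    exact Finset.card_le_univ s
  have a0 : Fin k := ⟨0, by omega⟩
  have b0 : Fin m := ⟨0, by omega⟩
  have c0 : Fin n := ⟨0, by omega⟩
  -- upper bound
  have hub : ∀ N ∈ {N | ∃ s : Finset (Fin k × Fin m × Fin n),
      IsCoclique (Gamma k m n) ↑s ∧ s.card = N}, N ≤ max k n := by
    rintro N ⟨s, hco, rfl⟩
    by_cases hc : ∀ v ∈ s, ∀ w ∈ s, v.2.2 = w.2.2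
    · -- all same color: project to first coordinate, injective
      have hinj : Set.InjOn (fun v : Fin k × Fin m × Fin n => v.1) ↑s := by
        intro v hv w hw hvw
        by_contra hne
        have hadj : (Gamma k m n).Adj v w := by
          left
          refine ⟨hc v hv w hw, ?_⟩
          intro hb
          exact hne (Prod.ext hvw (Prod.ext hb (hc v hv w hw)))
        exact hco hv hw hadj
      calc s.card = (s.image (fun v => v.1)).card :=
            (Finset.card_image_of_injOn hinj).symm
        _ ≤ k := le_trans (Finset.card_le_univ _) (by simp)
        _ ≤ max k n := le_max_left _ _
    · push_neg at hc
      obtain ⟨u, hu, u', hu', huu'⟩ := hc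
      have hinj : Set.InjOn (fun v : Fin k × Fin m × Fin n => v.2.2) ↑s := by
        intro v hv w hw hvw
        by_contra hne
        -- v ≠ w, same color. Non-adjacency forces same b, so a differs.
        have hb : v.2.1 = w.2.1 := by
          by_contra hb
          exact hco hv hw (Or.inl ⟨hvw, hb⟩)
        have ha : v.1 ≠ w.1 := by
          intro ha
          exact hne (Prod.ext ha (Prod.ext hb hvw))
        -- pick z among u, u' with color ≠ color of v
        have key : ∀ z ∈ s, z.2.2 ≠ v.2.2 → False := by
          intro z hz hzc
          have h1 : z.1 = v.1 := by
            by_contra h1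
            exact hco hz hv (Or.inr ⟨hzc, h1⟩)
          have h2 : z.1 = w.1 := by
            by_contra h2
            exact hco hz hw (Or.inr ⟨fun h' => hzc (h'.trans hvw.symm), h2⟩)
          exact ha (h1 ▸ h2)
        by_cases h : u.2.2 = v.2.2
        · exact key u' hu' (fun h' => huu' (h.trans h'.symm))
        · exact key u hu h
      calc s.card = (s.image (fun v => v.2.2)).card :=
            (Finset.card_image_of_injOn hinj).symm
        _ ≤ n := le_trans (Finset.card_le_univ _) (by simp)
        _ ≤ max k n := le_max_right _ _
  have hk' : k ∈ {N | ∃ s : Finset (Fin k × Fin m × Fin n),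
      IsCoclique (Gamma k m n) ↑s ∧ s.card = N} := by
    refine ⟨Finset.univ.image (fun a : Fin k => (a, b0, c0)), ?_, ?_⟩
    · rintro v hv w hw hadj
      simp only [Finset.coe_image, Set.mem_image] at hv hw
      obtain ⟨a, -, rfl⟩ := hv
      obtain ⟨a', -, rfl⟩ := hw
      rcases hadj with ⟨-, h2⟩ | ⟨h1, -⟩
      · exact h2 rfl
      · exact h1 rfl
    · rw [Finset.card_image_of_injective _ (fun a a' h => (Prod.mk.injEq _ _ _ _).mp h |>.1)]
      simp
  have hn' : n ∈ {N | ∃ s : Finset (Fin k × Fin m × Fin n),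
      IsCoclique (Gamma k m n) ↑s ∧ s.card = N} := by
    refine ⟨Finset.univ.image (fun c : Fin n => (a0, b0, c)), ?_, ?_⟩
    · rintro v hv w hw hadj
      simp only [Finset.coe_image, Set.mem_image] at hv hw
      obtain ⟨c, -, rfl⟩ := hv
      obtain ⟨c', -, rfl⟩ := hw
      rcases hadj with ⟨h1, h2⟩ | ⟨-, h2⟩
      · exact h2 rfl
      · exact h2 rfl
    · rw [Finset.card_image_of_injective]
      · simp
      · intro c c' h
        exact ((Prod.mk.injEq _ _ _ _).mp ((Prod.mk.injEq _ _ _ _).mp h).2).2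
  unfold indepNum
  apply le_antisymm
  · exact csSup_le ⟨k, hk'⟩ hub
  · exact max_le (le_csSup hbdd hk') (le_csSup hbdd hn')
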